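/- Let X = ℝ with the discrete topology, Y its one-point compactification, 𝔠 = C_Y (so A ∈ 𝔠 iff all members of A are finite or all are infinite). Then the family N_𝔠, defined by A ∈ N_𝔠 iff ⋂_{A∈A}A ≠ ∅ or all elements of A are infinite, is a nearness on X, even though 𝔠 ≠ C_E for every coarse structure E on X. -/

import Mathlib

def veeFam {X : Type*} (𝓐 𝓑 : Set (Set X)) : Set (Set X) :=
  {C | ∃ A ∈ 𝓐, ∃ B ∈ 𝓑, C = A ∪ B}

structure IsLSR {X : Type*} (𝔠 : Set (Set (Set X))) : Prop where
  singleton_mem : ∀ A : Set X, ({A} : Set (Set X)) ∈ 𝔠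
  subfamily : ∀ ⦃𝓐 𝓑 : Set (Set X)⦄, 𝓐 ∈ 𝔠 → 𝓑 ⊆ 𝓐 → 𝓑 ∈ 𝔠
  union_mem : ∀ ⦃𝓐 𝓑 : Set (Set X)⦄, 𝓐 ∈ 𝔠 → 𝓑 ∈ 𝔠 → (𝓐 ∩ 𝓑).Nonempty → 𝓐 ∪ 𝓑 ∈ 𝔠
  vee_mem : ∀ ⦃𝓐 𝓑 : Set (Set X)⦄, 𝓐 ∈ 𝔠 → 𝓑 ∈ 𝔠 → veeFam 𝓐 𝓑 ∈ 𝔠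
def relImage {X : Type*} (E : Set (X × X)) (A : Set X) : Set X :=
  {b | ∃ a ∈ A, (a, b) ∈ E}

structure IsCoarseStructure {X : Type*} (𝓔 : Set (Set (X × X))) : Prop where
  subset_mem : ∀ ⦃E F : Set (X × X)⦄, F ∈ 𝓔 → E ⊆ F → E ∈ 𝓔
  union_mem : ∀ ⦃E F : Set (X × X)⦄, E ∈ 𝓔 → F ∈ 𝓔 → E ∪ F ∈ 𝓔
  inv_mem : ∀ ⦃E : Set (X × X)⦄, E ∈ 𝓔 → {p : X × X | (p.2, p.1) ∈ E} ∈ 𝓔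
  comp_mem : ∀ ⦃E F : Set (X × X)⦄, E ∈ 𝓔 → F ∈ 𝓔 →
    {p : X × X | ∃ z : X, (p.1, z) ∈ F ∧ (z, p.2) ∈ E} ∈ 𝓔
  diag_mem : {p : X × X | p.1 = p.2} ∈ 𝓔

def CofE {X : Type*} (𝓔 : Set (Set (X × X))) : Set (Set (Set X)) :=
  {𝓐 | ∃ E ∈ 𝓔, ∀ A ∈ 𝓐, ∀ B ∈ 𝓐, A ⊆ relImage E B}
def llRel {X : Type*} (𝓑 𝓐 : Set (Set X)) : Prop := ∀ A ∈ 𝓐, ∃ B ∈ 𝓑, B ⊆ A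

structure IsNearness {X : Type*} (N : Set (Set (Set X))) : Prop where
  inter_mem : ∀ 𝓐 : Set (Set X), (⋂₀ 𝓐).Nonempty → 𝓐 ∈ N
  mono : ∀ ⦃𝓐 𝓑 : Set (Set X)⦄, 𝓐 ∈ N → llRel 𝓐 𝓑 → 𝓑 ∈ N
  not_empty_mem : ∀ 𝓐 ∈ N, (∅ : Set X) ∉ 𝓐
  vee_not_mem : ∀ ⦃𝓐 𝓑 : Set (Set X)⦄, 𝓐 ∉ N → 𝓑 ∉ N → veeFam 𝓐 𝓑 ∉ N

theorem stmt11 :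
    IsNearness ({𝓐 : Set (Set ℝ) | (⋂₀ 𝓐).Nonempty ∨ ∀ A ∈ 𝓐, A.Infinite} :
      Set (Set (Set ℝ))) ∧
    ∀ 𝓔 : Set (Set (ℝ × ℝ)), IsCoarseStructure 𝓔 →
      ({𝓐 : Set (Set ℝ) | (∀ A ∈ 𝓐, A.Finite) ∨ (∀ A ∈ 𝓐, A.Infinite)} :
        Set (Set (Set ℝ))) ≠ CofE 𝓔 := by
  constructor
  · constructor
    · intro 𝓐 h; exact Or.inl h
    · rintro 𝓐 𝓑 (⟨x, hx⟩ | hinf) hll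
      · exact Or.inl ⟨x, fun B hB => by
          obtain ⟨A, hA, hAB⟩ := hll B hB
          exact hAB (hx A hA)⟩
      · refine Or.inr fun B hB => ?_
        obtain ⟨A, hA, hAB⟩ := hll B hB
        exact (hinf A hA).mono hAB
    · rintro 𝓐 (⟨x, hx⟩ | hinf) h0
      · exact hx ∅ h0
      · exact (hinf ∅ h0) Set.finite_empty
    · intro 𝓐 𝓑 hA hB hV
      simp only [Set.mem_setOf_eq] at hA hB hV
      push_neg at hA hB
      obtain ⟨hAi, A0, hA0, hA0f⟩ := hA
      obtain ⟨hBi, B0, hB0, hB0f⟩ := hB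
      rcases hV with ⟨x, hx⟩ | hinf
      · have key : (∀ A ∈ 𝓐, x ∈ A) ∨ (∀ B ∈ 𝓑, x ∈ B) := by
          by_contra hc
          push_neg at hc
          obtain ⟨⟨A, hAm, hxA⟩, B, hBm, hxB⟩ := hc
          have : x ∈ A ∪ B := hx (A ∪ B) ⟨A, hAm, B, hBm, rfl⟩
          rcases this with h | h
          · exact hxA h
          · exact hxB h
        rcases key with h | h
        · have hx𝓐 : x ∈ ⋂₀ 𝓐 := fun A hAm => h A hAm
          rw [hAi] at hx𝓐; exact hx𝓐
        · have hx𝓑 : x ∈ ⋂₀ 𝓑 := fun B hBm => h B hBm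
          rw [hBi] at hx𝓑; exact hx𝓑
      · exact (hinf (A0 ∪ B0) ⟨A0, hA0, B0, hB0, rfl⟩) (hA0f.union hB0f)
  · intro 𝓔 _ heq
    have h1 : (Set.range (fun x : ℝ => ({x} : Set ℝ))) ∈ CofE 𝓔 := by
      rw [← heq]
      exact Or.inl (by rintro A ⟨x, rfl⟩; exact Set.finite_singleton x)
    obtain ⟨E, hE, hEp⟩ := h1
    have hEuniv : ∀ p : ℝ × ℝ, p ∈ E := by
      rintro ⟨a, b⟩
      have := hEp {b} ⟨b, rfl⟩ {a} ⟨a, rfl⟩ rfl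
      obtain ⟨c, hc, hcb⟩ := this
      rw [Set.mem_singleton_iff] at hc
      subst hc
      exact hcb
    have h2 : ({{(0:ℝ)}, Set.univ} : Set (Set ℝ)) ∈ CofE 𝓔 := by
      refine ⟨E, hE, fun A _ B hB x _ => ?_⟩
      rcases hB with rfl | hB
      · exact ⟨0, rfl, hEuniv _⟩
      · rw [Set.mem_singleton_iff] at hB
        subst hB
        exact ⟨0, Set.mem_univ 0, hEuniv _⟩
    rw [← heq] at h2
    rcases h2 with h | h
    · exact Set.infinite_univ (h Set.univ (Or.inr rfl))
    · exact (h {0} (Or.inl rfl)) (Set.finite_singleton 0)
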